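/- arXiv:math/0702167 — 3 statements merged into one kernel-verified Lean document; each statement's English description precedes it below -/
import Mathlib

section
/- Let p be a nonzero harmonic polynomial on ℝ^n that is homogeneous of degree 2. Then the Lebesgue measure of the set {x ∈ B(0,1) : p(x) < 0} is at least c_n for some dimensional constant c_n > 0 depending only on n (in particular, the negativity set of any such polynomial in the unit ball has positive measure). -/
open MeasureTheory Metric Real
noncomputable section

open MvPolynomial

lemma fs_degree_add {n : ℕ} (a b : Fin n →₀ ℕ) : (a + b).degree = a.degree + b.degree := by
  simp only [Finsupp.degree_eq_weight_one]
  exact map_add _ a b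

lemma fs_degree_single {n : ℕ} (i : Fin n) (k : ℕ) : (Finsupp.single i k).degree = k := by
  simp [Finsupp.degree, Finsupp.support_single_ne_zero, Finsupp.single_eq_same]
  rcases eq_or_ne k 0 with rfl | hk
  · simp
  · exact Finsupp.degree_single i k

lemma fs_exists_single_le {n : ℕ} (d : Fin n →₀ ℕ) (hd : d.degree ≠ 0) :
    ∃ i e, d = Finsupp.single i 1 + e ∧ e.degree + 1 = d.degree := by
  have h0 : d ≠ 0 := fun h => hd (h ▸ map_zero Finsupp.degree)
  obtain ⟨i, hi⟩ := Finsupp.ne_iff.mp h0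
  simp only [Finsupp.coe_zero, Pi.zero_apply] at hi
  refine ⟨i, d - Finsupp.single i 1, ?_, ?_⟩
  · ext a
    simp only [Finsupp.coe_add, Pi.add_apply, Finsupp.coe_tsub, Pi.sub_apply]
    rcases eq_or_ne i a with rfl | hne
    · rw [Finsupp.single_eq_same]; omega
    · rw [Finsupp.single_eq_of_ne' hne]; omega
  · have : d = Finsupp.single i 1 + (d - Finsupp.single i 1) := by
      ext a
      simp only [Finsupp.coe_add, Pi.add_apply, Finsupp.coe_tsub, Pi.sub_apply]
      rcases eq_or_ne i a with rfl | hne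
      · rw [Finsupp.single_eq_same]; omega
      · rw [Finsupp.single_eq_of_ne' hne]; omega
    conv_rhs => rw [this]
    rw [fs_degree_add, fs_degree_single]
    ring

lemma degree_two_classify {n : ℕ} (d : Fin n →₀ ℕ) (hd : d.degree = 2) :
    ∃ i j, d = Finsupp.single i 1 + Finsupp.single j 1 := by
  obtain ⟨i, e, hie, hdeg⟩ := fs_exists_single_le d (by omega)
  rw [hd] at hdeg
  obtain ⟨j, f, hjf, hdeg'⟩ := fs_exists_single_le e (by omega)
  have hf : f = 0 := by
    rw [← Finsupp.degree_eq_zero_iff]; omega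
  exact ⟨i, j, by rw [hie, hjf, hf, add_zero]⟩

lemma hom_eval_smul {n m : ℕ} (Q : MvPolynomial (Fin n) ℝ) (hQ : Q.IsHomogeneous m)
    (t : ℝ) (x : Fin n → ℝ) :
    eval (fun i => t * x i) Q = t ^ m * eval x Q := by
  rw [eval_eq', eval_eq', Finset.mul_sum]
  refine Finset.sum_congr rfl fun d hd => ?_
  have hdeg : d.degree = m := by
    by_contra h
    exact (mem_support_iff.mp hd) (hQ.coeff_eq_zero h)
  have key : ∏ i, (t * x i) ^ d i = t ^ m * ∏ i, x i ^ d i := by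
    simp_rw [mul_pow]
    rw [Finset.prod_mul_distrib, Finset.prod_pow_eq_pow_sum]
    congr 2
    rw [← hdeg]
    unfold Finsupp.degree
    exact (Finset.sum_subset (Finset.subset_univ d.support) (fun i _ hi => by
      simpa using Finsupp.notMem_support_iff.mp hi)).symm
  rw [key]; ring

lemma eval_homComp_two {n : ℕ} (P : MvPolynomial (Fin n) ℝ) (p : EuclideanSpace ℝ (Fin n) → ℝ)
    (hp : ∀ x : EuclideanSpace ℝ (Fin n), p x = eval (fun i => x i) P)
    (hhom : ∀ t : ℝ, 0 < t → ∀ x, p (t • x) = t ^ 2 * p x) :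
    ∀ x : EuclideanSpace ℝ (Fin n), p x = eval (fun i => x i) (homogeneousComponent 2 P) := by
  intro x
  set N := P.totalDegree + 3 with hN
  have hPsum : (∑ d ∈ Finset.range N, homogeneousComponent d P) = P := by
    conv_rhs => rw [← sum_homogeneousComponent P]
    refine (Finset.sum_subset (f := fun d => homogeneousComponent d P) (Finset.range_subset_range.mpr (show P.totalDegree + 1 ≤ N by omega)) fun d _ hd => ?_).symm
    refine homogeneousComponent_eq_zero d P ?_
    simp only [Finset.mem_range, not_lt] at hd
    omega
  set a : ℕ → ℝ := fun d => eval (fun i => x i) (homogeneousComponent d P) with ha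
  set q : Polynomial ℝ :=
    (∑ d ∈ Finset.range N, Polynomial.C (a d) * Polynomial.X ^ d)
      - Polynomial.C (p x) * Polynomial.X ^ 2 with hqdef
  have hq0 : ∀ t : ℝ, 0 < t → q.eval t = 0 := by
    intro t ht
    have h1 : p (t • x) = ∑ d ∈ Finset.range N, t ^ d * a d := by
      rw [hp]
      have hco : (fun i => (t • x) i) = fun i => t * x i := rfl
      rw [hco]
      conv_lhs => rw [← hPsum]
      rw [map_sum]
      exact Finset.sum_congr rfl fun d _ =>
        hom_eval_smul _ (homogeneousComponent_isHomogeneous d P) t _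
    have h2 := hhom t ht x
    rw [h1] at h2
    simp only [hqdef, Polynomial.eval_sub, Polynomial.eval_finset_sum, Polynomial.eval_mul,
      Polynomial.eval_C, Polynomial.eval_pow, Polynomial.eval_X]
    have hcomm : ∑ d ∈ Finset.range N, a d * t ^ d = ∑ d ∈ Finset.range N, t ^ d * a d :=
      Finset.sum_congr rfl fun d _ => mul_comm _ _
    rw [hcomm, h2]
    ring
  have hq : q = 0 := by
    apply Polynomial.eq_zero_of_infinite_isRoot
    apply Set.Infinite.mono (s := Set.Ioi (0:ℝ))
    · intro t ht; exact hq0 t ht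
    · exact Set.Ioi_infinite 0
  have hc2 := congrArg (fun r => Polynomial.coeff r 2) hq
  simp only [hqdef, Polynomial.coeff_sub, Polynomial.finset_sum_coeff, Polynomial.coeff_C_mul,
    Polynomial.coeff_X_pow, Polynomial.coeff_zero, mul_ite, mul_one, mul_zero] at hc2
  rw [Finset.sum_ite_eq (Finset.range N) 2 a, if_pos (Finset.mem_range.mpr (by omega)),
    if_true] at hc2
  have h3 : a 2 = p x := by linarith
  rw [← h3]

lemma prod_pow_single {n : ℕ} (x : Fin n → ℝ) (a : Fin n) :
    ∏ i, x i ^ ((Finsupp.single a 1 : Fin n →₀ ℕ) i) = x a := by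
  rw [Finset.prod_eq_single a (fun i _ hi => by
    rw [Finsupp.single_eq_of_ne' (Ne.symm hi), pow_zero]) (by simp)]
  rw [Finsupp.single_eq_same, pow_one]

lemma prod_pow_single_add {n : ℕ} (x : Fin n → ℝ) (a b : Fin n) :
    ∏ i, x i ^ ((Finsupp.single a 1 + Finsupp.single b 1 : Fin n →₀ ℕ) i) = x a * x b := by
  simp only [Finsupp.add_apply, pow_add, Finset.prod_mul_distrib]
  rw [prod_pow_single, prod_pow_single]

lemma double_collapse {n : ℕ} (a b : Fin n) (x : Fin n → ℝ) (c : ℝ) :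
    ∑ i, ∑ j, (1/2 : ℝ) * (c * (((if a = i then (1:ℝ) else 0) * (if b = j then 1 else 0)
      + (if b = i then (1:ℝ) else 0) * (if a = j then 1 else 0)) * (x i * x j)))
      = c * (x a * x b) := by
  have h1 : ∀ (u : Fin n) (g : Fin n → ℝ), ∑ i, (if u = i then (1:ℝ) else 0) * g i = g u := by
    intro u g
    simp [ite_mul, Finset.sum_ite_eq]
  have : ∀ i, ∑ j, (1/2 : ℝ) * (c * (((if a = i then (1:ℝ) else 0) * (if b = j then 1 else 0)
      + (if b = i then (1:ℝ) else 0) * (if a = j then 1 else 0)) * (x i * x j)))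
      = (1/2 : ℝ) * c * x i *
        ((if a = i then (1:ℝ) else 0) * x b + (if b = i then (1:ℝ) else 0) * x a) := by
    intro i
    rw [show ((if a = i then (1:ℝ) else 0) * x b + (if b = i then (1:ℝ) else 0) * x a)
      = (∑ j, (if b = j then (1:ℝ) else 0) * ((if a = i then (1:ℝ) else 0) * x j))
        + ∑ j, (if a = j then (1:ℝ) else 0) * ((if b = i then (1:ℝ) else 0) * x j) by
        rw [h1 b, h1 a]]
    rw [mul_add, Finset.mul_sum, Finset.mul_sum, ← Finset.sum_add_distrib]
    refine Finset.sum_congr rfl fun j _ => by ring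
  rw [Finset.sum_congr rfl fun i _ => this i]
  rw [show (∑ i, (1/2 : ℝ) * c * x i *
      ((if a = i then (1:ℝ) else 0) * x b + (if b = i then (1:ℝ) else 0) * x a))
    = (∑ i, (if a = i then (1:ℝ) else 0) * ((1/2 : ℝ) * c * x i * x b))
      + ∑ i, (if b = i then (1:ℝ) else 0) * ((1/2 : ℝ) * c * x i * x a) by
      rw [← Finset.sum_add_distrib]
      exact Finset.sum_congr rfl fun i _ => by ring]
  rw [h1 a, h1 b]
  ring

lemma quad_rep {n : ℕ} (Q : MvPolynomial (Fin n) ℝ) (hQ : Q.IsHomogeneous 2) :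
    ∃ A : Matrix (Fin n) (Fin n) ℝ, (∀ i j, A i j = A j i) ∧
      ∀ x : Fin n → ℝ, eval x Q = ∑ i, ∑ j, A i j * x i * x j := by
  classical
  have hcl : ∀ d : {d // d ∈ Q.support}, ∃ ij : Fin n × Fin n,
      (d : Fin n →₀ ℕ) = Finsupp.single ij.1 1 + Finsupp.single ij.2 1 := by
    rintro ⟨d, hd⟩
    have hdeg : d.degree = 2 := by
      by_contra h
      exact (mem_support_iff.mp hd) (hQ.coeff_eq_zero h)
    obtain ⟨i, j, h⟩ := degree_two_classify d hdeg
    exact ⟨(i, j), h⟩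
  choose f hf using hcl
  refine ⟨fun i j => ∑ d ∈ Q.support.attach, (1/2 : ℝ) * (coeff d.1 Q *
      ((if (f d).1 = i then (1:ℝ) else 0) * (if (f d).2 = j then 1 else 0)
        + (if (f d).2 = i then (1:ℝ) else 0) * (if (f d).1 = j then 1 else 0))), ?_, ?_⟩
  · intro i j
    refine Finset.sum_congr rfl fun d _ => by ring
  · intro x
    have hRHS : ∀ i j, (∑ d ∈ Q.support.attach, (1/2 : ℝ) * (coeff d.1 Q *
        ((if (f d).1 = i then (1:ℝ) else 0) * (if (f d).2 = j then 1 else 0)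
          + (if (f d).2 = i then (1:ℝ) else 0) * (if (f d).1 = j then 1 else 0)))) * x i * x j
        = ∑ d ∈ Q.support.attach, (1/2 : ℝ) * (coeff d.1 Q *
        (((if (f d).1 = i then (1:ℝ) else 0) * (if (f d).2 = j then 1 else 0)
          + (if (f d).2 = i then (1:ℝ) else 0) * (if (f d).1 = j then 1 else 0)) * (x i * x j))) := by
      intro i j
      rw [Finset.sum_mul, Finset.sum_mul]
      exact Finset.sum_congr rfl fun d _ => by ring
    conv_rhs => rw [Finset.sum_congr rfl fun i _ => Finset.sum_congr rfl fun j _ => hRHS i j]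
    conv_rhs => rw [Finset.sum_congr rfl fun i _ => Finset.sum_comm]
    rw [Finset.sum_comm]
    conv_rhs => rw [Finset.sum_congr rfl fun d _ => double_collapse (f d).1 (f d).2 x (coeff d.1 Q)]
    rw [eval_eq']
    rw [← Finset.sum_attach Q.support (fun d => coeff d Q * ∏ i, x i ^ d i)]
    refine Finset.sum_congr rfl fun d _ => ?_
    congr 1
    rw [hf d]
    exact prod_pow_single_add x (f d).1 (f d).2

lemma proj_apply' {n : ℕ} (i : Fin n) (v : EuclideanSpace ℝ (Fin n)) :
    EuclideanSpace.proj i v = v i := rfl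

/-- The Laplacian of a function on Euclidean space. -/
def lap {n : ℕ} (u : EuclideanSpace ℝ (Fin n) → ℝ) (x : EuclideanSpace ℝ (Fin n)) : ℝ :=
  ∑ i, fderiv ℝ (fun y => fderiv ℝ u y (EuclideanSpace.single i 1)) x (EuclideanSpace.single i 1)

lemma lap_quad {n : ℕ} (A : Matrix (Fin n) (Fin n) ℝ) (p : EuclideanSpace ℝ (Fin n) → ℝ)
    (hp : ∀ x, p x = ∑ i, ∑ j, A i j * x i * x j) (x : EuclideanSpace ℝ (Fin n)) :
    lap p x = 2 * ∑ k, A k k := by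
  classical
  set L : Fin n → (EuclideanSpace ℝ (Fin n) →L[ℝ] ℝ) := fun i => EuclideanSpace.proj i with hL
  have hFd : ∀ y, HasFDerivAt p
      (∑ i, ∑ j, ((A i j * y i) • L j + (A i j * y j) • L i)) y := by
    intro y
    rw [show p = fun z => ∑ i, ∑ j, A i j * z i * z j from funext hp]
    refine HasFDerivAt.fun_sum fun i _ => ?_
    refine HasFDerivAt.fun_sum fun j _ => ?_
    have h1 : HasFDerivAt (fun z : EuclideanSpace ℝ (Fin n) => z i) (L i) y := (L i).hasFDerivAt
    have h2 : HasFDerivAt (fun z : EuclideanSpace ℝ (Fin n) => z j) (L j) y := (L j).hasFDerivAt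
    have h3 := (h1.const_mul (A i j)).mul h2
    exact h3.congr_fderiv (by rw [smul_smul, mul_comm (y j)])
  have hfd : ∀ y, fderiv ℝ p y = ∑ i, ∑ j, ((A i j * y i) • L j + (A i j * y j) • L i) :=
    fun y => (hFd y).fderiv
  have happ : ∀ (k : Fin n) (y : EuclideanSpace ℝ (Fin n)),
      fderiv ℝ p y (EuclideanSpace.single k 1) = ∑ i, (A i k + A k i) * y i := by
    intro k y
    rw [hfd y]
    simp only [ContinuousLinearMap.coe_sum', Finset.sum_apply, ContinuousLinearMap.add_apply,
      ContinuousLinearMap.coe_smul', Pi.smul_apply, smul_eq_mul, hL, proj_apply',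
      EuclideanSpace.single_apply]
    have hinner : ∀ i : Fin n, (∑ j, (A i j * y i * (if j = k then (1:ℝ) else 0)
        + A i j * y j * (if i = k then (1:ℝ) else 0)))
        = A i k * y i + (if i = k then (1:ℝ) else 0) * ∑ j, A i j * y j := by
      intro i
      rw [Finset.sum_add_distrib]
      congr 1
      · simp [mul_ite, Finset.sum_ite_eq']
      · rw [Finset.mul_sum]
        exact Finset.sum_congr rfl fun j _ => by ring
    rw [Finset.sum_congr rfl fun i _ => hinner i, Finset.sum_add_distrib]
    have hsecond : (∑ i, (if i = k then (1:ℝ) else 0) * ∑ j, A i j * y j)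
        = ∑ j, A k j * y j := by
      simp [ite_mul, Finset.sum_ite_eq']
    rw [hsecond, ← Finset.sum_add_distrib]
    exact Finset.sum_congr rfl fun i _ => by ring
  have hkey : ∀ k : Fin n, fderiv ℝ (fun y => fderiv ℝ p y (EuclideanSpace.single k 1)) x
      (EuclideanSpace.single k 1) = 2 * A k k := by
    intro k
    have hg : (fun y => fderiv ℝ p y (EuclideanSpace.single k 1))
        = ⇑(∑ i, (A i k + A k i) • L i) := by
      funext y
      rw [happ k y]
      simp [hL, ContinuousLinearMap.coe_sum', Finset.sum_apply]
    rw [hg, ContinuousLinearMap.fderiv]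
    simp only [ContinuousLinearMap.coe_sum', Finset.sum_apply, ContinuousLinearMap.coe_smul',
      Pi.smul_apply, smul_eq_mul, hL, proj_apply', EuclideanSpace.single_apply]
    rw [show (∑ i, (A i k + A k i) * (if i = k then (1:ℝ) else 0))
      = ∑ i, (if i = k then (A i k + A k i) else 0) from
        Finset.sum_congr rfl fun i _ => by split <;> simp]
    rw [Finset.sum_ite_eq' Finset.univ k (fun i => A i k + A k i), if_pos (Finset.mem_univ k)]
    ring
  unfold lap
  rw [Finset.sum_congr rfl fun k _ => hkey k, ← Finset.mul_sum]

lemma pilp_sum_apply {n : ℕ} {ι : Type*} (s : Finset ι) (f : ι → EuclideanSpace ℝ (Fin n))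
    (i : Fin n) : (∑ k ∈ s, f k) i = ∑ k ∈ s, f k i := by
  induction s using Finset.cons_induction with
  | empty => rfl
  | cons a s ha ih => rw [Finset.sum_cons, Finset.sum_cons, PiLp.add_apply, ih]

lemma euc_inner_eq {n : ℕ} (y z : EuclideanSpace ℝ (Fin n)) :
    (inner ℝ y z : ℝ) = ∑ i, y i * z i := by
  simp [PiLp.inner_apply, RCLike.inner_apply, starRingEnd_apply, star_trivial, mul_comm]

lemma exists_dir {n : ℕ} (hn : 1 ≤ n) (A : Matrix (Fin n) (Fin n) ℝ)
    (hsym : ∀ i j, A i j = A j i) (htr : ∑ k, A k k = 0)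
    (p : EuclideanSpace ℝ (Fin n) → ℝ)
    (hp : ∀ x, p x = ∑ i, ∑ j, A i j * x i * x j)
    (hp0 : p ≠ 0) :
    ∃ v : EuclideanSpace ℝ (Fin n), ‖v‖ = 1 ∧
      ∀ x : EuclideanSpace ℝ (Fin n),
        ((n : ℝ) - 1) * ‖x‖^2 < n * (inner ℝ v x : ℝ)^2 → p x < 0 := by
  classical
  have hA : A.IsHermitian := by
    unfold Matrix.IsHermitian
    ext i j
    rw [Matrix.conjTranspose_apply, star_trivial, hsym]
  set b := hA.eigenvectorBasis with hb
  set μ := hA.eigenvalues with hμ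
  have hAb : ∀ (k : Fin n) (i : Fin n), (∑ j, A i j * b k j) = μ k * b k i := by
    intro k i
    have h := congrFun (hA.mulVec_eigenvectorBasis k) i
    simpa [Matrix.mulVec, dotProduct] using h
  have hq : ∀ x : EuclideanSpace ℝ (Fin n), p x = ∑ k, μ k * (inner ℝ (b k) x : ℝ)^2 := by
    intro x
    have hxc : ∀ i, x i = ∑ k, (inner ℝ (b k) x : ℝ) * b k i := by
      intro i
      conv_lhs => rw [← b.sum_repr' x]
      rw [pilp_sum_apply]
      exact Finset.sum_congr rfl fun k _ => by rw [PiLp.smul_apply, smul_eq_mul]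
    rw [hp]
    have step1 : ∀ i, (∑ j, A i j * x i * x j) = x i * ∑ k, (inner ℝ (b k) x : ℝ) * (μ k * b k i) := by
      intro i
      have : (∑ j, A i j * x i * x j) = x i * ∑ j, A i j * x j := by
        rw [Finset.mul_sum]; exact Finset.sum_congr rfl fun j _ => by ring
      rw [this]
      congr 1
      calc ∑ j, A i j * x j = ∑ j, A i j * ∑ k, (inner ℝ (b k) x : ℝ) * b k j :=
            Finset.sum_congr rfl fun j _ => by rw [← hxc j]
        _ = ∑ j, ∑ k, (inner ℝ (b k) x : ℝ) * (A i j * b k j) := by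
            refine Finset.sum_congr rfl fun j _ => ?_
            rw [Finset.mul_sum]
            exact Finset.sum_congr rfl fun k _ => by ring
        _ = ∑ k, ∑ j, (inner ℝ (b k) x : ℝ) * (A i j * b k j) := Finset.sum_comm
        _ = ∑ k, (inner ℝ (b k) x : ℝ) * (μ k * b k i) := by
            refine Finset.sum_congr rfl fun k _ => ?_
            rw [← Finset.mul_sum, hAb k i]
    rw [Finset.sum_congr rfl fun i _ => step1 i]
    calc ∑ i, x i * ∑ k, (inner ℝ (b k) x : ℝ) * (μ k * b k i)
        = ∑ i, ∑ k, (inner ℝ (b k) x : ℝ) * μ k * (x i * b k i) := by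
          refine Finset.sum_congr rfl fun i _ => ?_
          rw [Finset.mul_sum]
          exact Finset.sum_congr rfl fun k _ => by ring
      _ = ∑ k, ∑ i, (inner ℝ (b k) x : ℝ) * μ k * (x i * b k i) := Finset.sum_comm
      _ = ∑ k, μ k * (inner ℝ (b k) x : ℝ)^2 := by
          refine Finset.sum_congr rfl fun k _ => ?_
          rw [← Finset.mul_sum]
          have : (∑ i, x i * b k i) = (inner ℝ (b k) x : ℝ) := by
            rw [euc_inner_eq]
            exact Finset.sum_congr rfl fun i _ => by ring
          rw [this]; ring
  have hpar : ∀ x : EuclideanSpace ℝ (Fin n), ‖x‖^2 = ∑ k, (inner ℝ (b k) x : ℝ)^2 := by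
    intro x
    rw [← b.repr.norm_map x, EuclideanSpace.norm_eq, Real.sq_sqrt (by positivity)]
    exact Finset.sum_congr rfl fun k _ => by
      rw [Real.norm_eq_abs, sq_abs, b.repr_apply_apply]
  have htrμ : ∑ k, μ k = 0 := by
    have hU := (Matrix.mem_unitaryGroup_iff'.mp (hA.eigenvectorUnitary).2)
    have hspec := hA.spectral_theorem
    have h1 : A.trace = (Matrix.diagonal (RCLike.ofReal ∘ μ)).trace := by
      conv_lhs => rw [hspec]
      rw [Unitary.conjStarAlgAut_apply, Matrix.trace_mul_cycle]
      rw [show star (hA.eigenvectorUnitary : Matrix (Fin n) (Fin n) ℝ) *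
        (hA.eigenvectorUnitary : Matrix (Fin n) (Fin n) ℝ) = 1 from hU, one_mul]
    rw [Matrix.trace_diagonal] at h1
    have h2 : A.trace = ∑ k, A k k := rfl
    rw [h2, htr] at h1
    simpa using h1.symm
  have hex : ∃ k, μ k ≠ 0 := by
    by_contra h
    push_neg at h
    apply hp0
    funext x
    rw [hq x]
    simp [h]
  obtain ⟨k₀, -, hk₀⟩ := Finset.exists_min_image Finset.univ μ ⟨⟨0, hn⟩, Finset.mem_univ _⟩
  have hk₀le : ∀ k, μ k₀ ≤ μ k := fun k => hk₀ k (Finset.mem_univ k)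
  have hneg : μ k₀ < 0 := by
    rcases lt_or_ge (μ k₀) 0 with h | h
    · exact h
    · exfalso
      obtain ⟨k, hk⟩ := hex
      have : ∀ j ∈ Finset.univ, (0:ℝ) ≤ μ j := fun j _ => le_trans h (hk₀le j)
      have := (Finset.sum_eq_zero_iff_of_nonneg this).mp htrμ k (Finset.mem_univ k)
      exact hk this
  have hbound : ∀ k, μ k ≤ ((n:ℝ) - 1) * (-μ k₀) := by
    intro k
    have hsplit : ∑ j ∈ Finset.univ.erase k, μ j + μ k = 0 := by
      rw [Finset.sum_erase_add Finset.univ μ (Finset.mem_univ k)]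
      exact htrμ
    have hcard : ((Finset.univ.erase k).card : ℝ) = (n:ℝ) - 1 := by
      rw [Finset.card_erase_of_mem (Finset.mem_univ k), Finset.card_univ, Fintype.card_fin]
      have : (1:ℕ) ≤ n := hn
      push_cast [Nat.cast_sub this]
      ring
    have hμk : μ k = ∑ j ∈ Finset.univ.erase k, (- μ j) := by
      have hnd : ∑ j ∈ Finset.univ.erase k, (- μ j) = - ∑ j ∈ Finset.univ.erase k, μ j := by
        exact Finset.sum_neg_distrib _
      rw [hnd]
      linarith
    rw [hμk]
    calc ∑ j ∈ Finset.univ.erase k, (- μ j) ≤ ∑ _j ∈ Finset.univ.erase k, (- μ k₀) :=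
          Finset.sum_le_sum fun j _ => by linarith [hk₀le j]
      _ = ((Finset.univ.erase k).card : ℝ) * (- μ k₀) := by
          rw [Finset.sum_const, nsmul_eq_mul]
      _ = ((n:ℝ) - 1) * (- μ k₀) := by rw [hcard]
  refine ⟨b k₀, b.orthonormal.1 k₀, ?_⟩
  intro x hx
  set c : Fin n → ℝ := fun k => (inner ℝ (b k) x : ℝ) with hc
  have hsplit : p x = μ k₀ * c k₀ ^ 2 + ∑ k ∈ Finset.univ.erase k₀, μ k * c k ^ 2 := by
    rw [hq x]
    rw [← Finset.sum_erase_add Finset.univ _ (Finset.mem_univ k₀)]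
    ring
  have hsum2 : ∑ k ∈ Finset.univ.erase k₀, c k ^ 2 = ‖x‖^2 - c k₀ ^ 2 := by
    have := hpar x
    rw [← Finset.sum_erase_add Finset.univ (fun k => c k ^ 2) (Finset.mem_univ k₀)] at this
    linarith
  have hub : ∑ k ∈ Finset.univ.erase k₀, μ k * c k ^ 2
      ≤ ((n:ℝ) - 1) * (-μ k₀) * (‖x‖^2 - c k₀ ^ 2) := by
    rw [← hsum2, Finset.mul_sum]
    exact Finset.sum_le_sum fun k _ => by
      have h1 := hbound k
      have h2 : (0:ℝ) ≤ c k ^ 2 := sq_nonneg _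
      nlinarith
  have hxnorm : c k₀ ^ 2 ≤ ‖x‖ ^ 2 := by
    have := hpar x
    have h2 : ∀ k ∈ Finset.univ, (0:ℝ) ≤ c k ^ 2 := fun k _ => sq_nonneg _
    calc c k₀ ^ 2 ≤ ∑ k, c k ^ 2 := Finset.single_le_sum h2 (Finset.mem_univ k₀)
      _ = ‖x‖ ^ 2 := (hpar x).symm
  have hfinal : p x ≤ (-μ k₀) * (((n:ℝ) - 1) * ‖x‖^2 - (n:ℝ) * c k₀ ^ 2) := by
    rw [hsplit]
    nlinarith
  have hlt : ((n:ℝ) - 1) * ‖x‖^2 - (n:ℝ) * c k₀ ^ 2 < 0 := by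
    rw [hc]
    simp only
    linarith [hx]
  calc p x ≤ (-μ k₀) * (((n:ℝ) - 1) * ‖x‖^2 - (n:ℝ) * c k₀ ^ 2) := hfinal
    _ < 0 := mul_neg_of_pos_of_neg (by linarith) hlt

/-- There is a dimensional constant `c_n > 0` such that the negativity set in the unit
ball of any nonzero degree-2 homogeneous harmonic polynomial on `ℝⁿ` has measure at
least `c_n`. -/
theorem measure_neg_set_homogeneous_harmonic_poly (n : ℕ) (hn : 1 ≤ n) :
    ∃ c : ℝ, 0 < c ∧
      ∀ (P : MvPolynomial (Fin n) ℝ) (p : EuclideanSpace ℝ (Fin n) → ℝ),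
        (∀ x : EuclideanSpace ℝ (Fin n), p x = MvPolynomial.eval (fun i => x i) P) →
        (∀ x, lap p x = 0) →
        (∀ (t : ℝ), 0 < t → ∀ x, p (t • x) = t ^ 2 * p x) →
        p ≠ 0 →
        ENNReal.ofReal c ≤ volume {x ∈ ball (0 : EuclideanSpace ℝ (Fin n)) 1 | p x < 0} := by
  classical
  set e₀ : EuclideanSpace ℝ (Fin n) := EuclideanSpace.single ⟨0, hn⟩ 1 with he₀
  have he₀norm : ‖e₀‖ = 1 := by
    rw [he₀, EuclideanSpace.norm_single, norm_one]
  have hcont : ∀ w : EuclideanSpace ℝ (Fin n), IsOpen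
      {x ∈ ball (0 : EuclideanSpace ℝ (Fin n)) 1 |
        ((n:ℝ) - 1) * ‖x‖^2 < n * (inner ℝ w x : ℝ)^2} := by
    intro w
    have : {x ∈ ball (0 : EuclideanSpace ℝ (Fin n)) 1 |
        ((n:ℝ) - 1) * ‖x‖^2 < n * (inner ℝ w x : ℝ)^2}
        = ball (0 : EuclideanSpace ℝ (Fin n)) 1 ∩
          {x | ((n:ℝ) - 1) * ‖x‖^2 < n * (inner ℝ w x : ℝ)^2} := rfl
    rw [this]
    refine isOpen_ball.inter (isOpen_lt ?_ ?_)
    · exact continuous_const.mul (continuous_norm.pow 2)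
    · exact continuous_const.mul ((continuous_const.inner continuous_id).pow 2)
  set S₀ : Set (EuclideanSpace ℝ (Fin n)) :=
    {x ∈ ball (0 : EuclideanSpace ℝ (Fin n)) 1 |
      ((n:ℝ) - 1) * ‖x‖^2 < n * (inner ℝ e₀ x : ℝ)^2} with hS₀
  have hopen : IsOpen S₀ := hcont e₀
  have hne : S₀.Nonempty := by
    refine ⟨(1/2 : ℝ) • e₀, ?_, ?_⟩
    · rw [mem_ball, dist_zero_right, norm_smul, he₀norm]
      norm_num
    · have h1 : ‖(1/2 : ℝ) • e₀‖^2 = 1/4 := by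
        rw [norm_smul, he₀norm]
        norm_num
      have h2 : (inner ℝ e₀ ((1/2 : ℝ) • e₀) : ℝ) = 1/2 := by
        rw [real_inner_smul_right, real_inner_self_eq_norm_sq, he₀norm]
        norm_num
      rw [h1, h2]
      have : (1:ℝ) ≤ (n:ℝ) := by exact_mod_cast hn
      nlinarith
  have hpos : (0 : ENNReal) < volume S₀ := hopen.measure_pos volume hne
  have hfin : volume S₀ < ⊤ :=
    lt_of_le_of_lt (measure_mono fun x hx => hx.1) measure_ball_lt_top
  refine ⟨(volume S₀).toReal, ENNReal.toReal_pos hpos.ne' hfin.ne, ?_⟩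
  intro P p hp hlap hhom hp0
  have hpe := eval_homComp_two P p hp hhom
  obtain ⟨A, hsym, hqf⟩ := quad_rep _ (homogeneousComponent_isHomogeneous 2 P)
  have hpA : ∀ x : EuclideanSpace ℝ (Fin n), p x = ∑ i, ∑ j, A i j * x i * x j :=
    fun x => (hpe x).trans (hqf _)
  have htr : ∑ k, A k k = 0 := by
    have h := lap_quad A p hpA 0
    rw [hlap 0] at h
    linarith
  obtain ⟨v, hv1, hvneg⟩ := exists_dir hn A hsym htr p hpA hp0
  set Sv : Set (EuclideanSpace ℝ (Fin n)) :=
    {x ∈ ball (0 : EuclideanSpace ℝ (Fin n)) 1 |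
      ((n:ℝ) - 1) * ‖x‖^2 < n * (inner ℝ v x : ℝ)^2} with hSv
  set f := Submodule.reflection (ℝ ∙ (e₀ - v))ᗮ with hf
  have hrefl : f e₀ = v := Submodule.reflection_sub (by rw [he₀norm, hv1])
  have hmp : MeasurePreserving f volume volume := f.measurePreserving
  have hpre : f ⁻¹' Sv = S₀ := by
    ext x
    have h1 : ‖f x‖ = ‖x‖ := f.norm_map x
    have h2 : (inner ℝ v (f x) : ℝ) = inner ℝ e₀ x := by
      rw [← hrefl]
      exact f.inner_map_map e₀ x
    simp only [Set.mem_preimage, hSv, hS₀, Set.mem_setOf_eq, mem_ball, dist_zero_right, h1, h2]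
  have hSveq : volume Sv = volume S₀ := by
    rw [← hpre]
    exact (hmp.measure_preimage (hcont v).measurableSet.nullMeasurableSet).symm
  have hsub : Sv ⊆ {x ∈ ball (0 : EuclideanSpace ℝ (Fin n)) 1 | p x < 0} :=
    fun x hx => ⟨hx.1, hvneg x hx.2⟩
  calc ENNReal.ofReal (volume S₀).toReal = volume S₀ := ENNReal.ofReal_toReal hfin.ne
    _ = volume Sv := hSveq.symm
    _ ≤ volume {x ∈ ball (0 : EuclideanSpace ℝ (Fin n)) 1 | p x < 0} := measure_mono hsub
end
end

section
/- Let U ⊂ ℝ^n be a bounded open connected set, Λ > 0 strictly less than the first Dirichlet eigenvalue μ_U of -Δ on U. Let f ∈ H¹₀(U) solve -Δf - Λf = -Λ in U (in the weak sense). Then f ≤ 0 a.e. in U. -/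
open MeasureTheory Metric Real
noncomputable section

namespace FredholmAux

def chi (ε : ℝ) (s : ℝ) : ℝ := Real.smoothTransition ((s - ε)/ε)
def psi (ε : ℝ) (t : ℝ) : ℝ := ∫ s in ε..t, chi ε s
def phi (ε : ℝ) (t : ℝ) : ℝ := ∫ s in ε..t, (chi ε s)^2

lemma chi_cont (ε : ℝ) : Continuous (chi ε) :=
  Real.smoothTransition.continuous.comp (by fun_prop)

lemma chi_nonneg (ε s : ℝ) : 0 ≤ chi ε s := Real.smoothTransition.nonneg _
lemma chi_le_one (ε s : ℝ) : chi ε s ≤ 1 := Real.smoothTransition.le_one _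

lemma chi_eq_zero {ε s : ℝ} (hε : 0 < ε) (h : s ≤ ε) : chi ε s = 0 :=
  Real.smoothTransition.zero_of_nonpos (div_nonpos_iff.2 (Or.inr ⟨by linarith, hε.le⟩))

lemma chi_eq_one {ε s : ℝ} (hε : 0 < ε) (h : 2*ε ≤ s) : chi ε s = 1 :=
  Real.smoothTransition.one_of_one_le ((le_div_iff₀ hε).2 (by linarith))

lemma psi_hasDeriv (ε t : ℝ) : HasDerivAt (psi ε) (chi ε t) t :=
  intervalIntegral.integral_hasDerivAt_right ((chi_cont ε).intervalIntegrable _ _)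
    ((chi_cont ε).stronglyMeasurableAtFilter _ _) (chi_cont ε).continuousAt

lemma phi_hasDeriv (ε t : ℝ) : HasDerivAt (phi ε) ((chi ε t)^2) t :=
  intervalIntegral.integral_hasDerivAt_right (((chi_cont ε).pow 2).intervalIntegrable _ _)
    (((chi_cont ε).pow 2).stronglyMeasurableAtFilter _ _) ((chi_cont ε).pow 2).continuousAt

lemma psi_eq_zero {ε t : ℝ} (hε : 0 < ε) (h : t ≤ ε) : psi ε t = 0 := by
  have h0 : (∫ s in t..ε, chi ε s) = 0 := by
    rw [intervalIntegral.integral_congr (g := fun _ => (0:ℝ))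
      (fun s hs => chi_eq_zero hε ((Set.uIcc_of_le h ▸ hs).2))]
    simp
  rw [psi, intervalIntegral.integral_symm t ε, h0, neg_zero]

lemma phi_eq_zero {ε t : ℝ} (hε : 0 < ε) (h : t ≤ ε) : phi ε t = 0 := by
  have h0 : (∫ s in t..ε, (chi ε s)^2) = 0 := by
    rw [intervalIntegral.integral_congr (g := fun _ => (0:ℝ))
      (fun s hs => by rw [chi_eq_zero hε ((Set.uIcc_of_le h ▸ hs).2)]; ring)]
    simp
  rw [phi, intervalIntegral.integral_symm t ε, h0, neg_zero]

lemma psi_nonneg {ε : ℝ} (hε : 0 < ε) (t : ℝ) : 0 ≤ psi ε t := by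
  rcases le_or_gt t ε with h | h
  · rw [psi_eq_zero hε h]
  · exact intervalIntegral.integral_nonneg h.le (fun s _ => chi_nonneg ε s)

lemma phi_nonneg {ε : ℝ} (hε : 0 < ε) (t : ℝ) : 0 ≤ phi ε t := by
  rcases le_or_gt t ε with h | h
  · rw [phi_eq_zero hε h]
  · exact intervalIntegral.integral_nonneg h.le (fun s _ => sq_nonneg _)

lemma phi_le_psi {ε : ℝ} (hε : 0 < ε) (t : ℝ) : phi ε t ≤ psi ε t := by
  rcases le_or_gt t ε with h | h
  · rw [phi_eq_zero hε h, psi_eq_zero hε h]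
  · exact intervalIntegral.integral_mono_on h.le
      (((chi_cont ε).pow 2).intervalIntegrable _ _) ((chi_cont ε).intervalIntegrable _ _)
      (fun s _ => by
        have h1 := chi_nonneg ε s; have h2 := chi_le_one ε s; nlinarith)

lemma psi_ge {ε t : ℝ} (hε : 0 < ε) (h : 2*ε ≤ t) : t - 2*ε ≤ psi ε t := by
  have hsplit : (∫ s in ε..(2*ε), chi ε s) + (∫ s in (2*ε)..t, chi ε s) = psi ε t :=
    intervalIntegral.integral_add_adjacent_intervals
      ((chi_cont ε).intervalIntegrable _ _) ((chi_cont ε).intervalIntegrable _ _)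
  have h1 : (0:ℝ) ≤ ∫ s in ε..(2*ε), chi ε s :=
    intervalIntegral.integral_nonneg (by linarith) (fun s _ => chi_nonneg ε s)
  have h2 : (∫ s in (2*ε)..t, chi ε s) = t - 2*ε := by
    rw [intervalIntegral.integral_congr (g := fun _ => (1:ℝ))]
    · simp
    · intro s hs
      rw [Set.uIcc_of_le h] at hs
      exact chi_eq_one hε hs.1
  linarith

lemma psi_lipschitz {ε : ℝ} : LipschitzWith 1 (psi ε) := by
  rw [← lipschitzOnWith_univ]
  refine convex_univ.lipschitzOnWith_of_nnnorm_hasDerivWithin_le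
    (f' := fun t => chi ε t) (fun x _ => (psi_hasDeriv ε x).hasDerivWithinAt) (fun x _ => ?_)
  rw [← NNReal.coe_le_coe, coe_nnnorm, Real.norm_eq_abs,
    abs_of_nonneg (chi_nonneg ε x)]
  exact chi_le_one ε x

lemma key_ineq {ε t : ℝ} (hε : 0 < ε) (hε2 : ε ≤ 1/2) :
    phi ε t * (t - 1) ≤ (psi ε t)^2 := by
  rcases le_or_gt t 1 with h | h
  · have := phi_nonneg hε t
    nlinarith [sq_nonneg (psi ε t)]
  · have h2 : 2*ε ≤ t := by linarith
    have hge := psi_ge hε h2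
    have hle := phi_le_psi hε t
    have hnn := psi_nonneg hε t
    nlinarith

end FredholmAux

namespace FredholmAux

instance instPO {m : ℕ} : PartialOrder (EuclideanSpace ℝ (Fin m)) :=
  PartialOrder.lift (fun x : EuclideanSpace ℝ (Fin m) => (WithLp.ofLp x : Fin m → ℝ)) (WithLp.ofLp_injective 2)

lemma abs_coord_le_norm {m : ℕ} (x : EuclideanSpace ℝ (Fin m)) (i : Fin m) :
    |x i| ≤ ‖x‖ := by
  rw [EuclideanSpace.norm_eq, ← Real.sqrt_sq_eq_abs]
  apply Real.sqrt_le_sqrt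
  calc x i ^ 2 = ‖x i‖ ^ 2 := by rw [Real.norm_eq_abs, sq_abs]
  _ ≤ ∑ j, ‖x j‖ ^ 2 := Finset.single_le_sum (f := fun j => ‖x j‖ ^ 2) (fun j _ => sq_nonneg _) (Finset.mem_univ i)

lemma green {n : ℕ}
    (V : EuclideanSpace ℝ (Fin (n+1)) → EuclideanSpace ℝ (Fin (n+1)))
    (V' : EuclideanSpace ℝ (Fin (n+1)) →
      EuclideanSpace ℝ (Fin (n+1)) →L[ℝ] EuclideanSpace ℝ (Fin (n+1)))
    (K : Set (EuclideanSpace ℝ (Fin (n+1)))) (hK : IsClosed K)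
    (hKb : Bornology.IsBounded K)
    (hV : ∀ x, HasFDerivAt V (V' x) x)
    (hsupp : ∀ x ∉ K, V x = 0)
    (hi : Integrable (fun x => ∑ i, V' x (EuclideanSpace.single i 1) i)) :
    (∫ x, ∑ i, V' x (EuclideanSpace.single i 1) i) = 0 := by
  obtain ⟨R, hR⟩ := hKb.subset_closedBall 0
  set Q : ℝ := |R| + 1 with hQ
  have hQpos : 0 < Q := by positivity
  set a : EuclideanSpace ℝ (Fin (n+1)) := WithLp.toLp 2 (fun _ => -Q) with ha
  set b : EuclideanSpace ℝ (Fin (n+1)) := WithLp.toLp 2 (fun _ => Q) with hb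
  have hcoord : ∀ x ∈ K, ∀ i, |x i| < Q := by
    intro x hx i
    have h1 : ‖x‖ ≤ R := by simpa [Metric.mem_closedBall, dist_zero_right] using hR hx
    have := abs_coord_le_norm x i
    calc |x i| ≤ R := le_trans this h1
    _ ≤ |R| := le_abs_self R
    _ < Q := by rw [hQ]; linarith
  have hKIcc : K ⊆ Set.Icc a b := by
    intro x hx
    have h := fun i => abs_lt.1 (hcoord x hx i)
    exact ⟨fun i => le_of_lt (show -Q < x i from (h i).1),
           fun i => le_of_lt (show x i < Q from (h i).2)⟩
  have hle : a ≤ b := fun i => by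
    show -Q ≤ Q; linarith
  -- the equivalence
  set eL : EuclideanSpace ℝ (Fin (n+1)) ≃L[ℝ] (Fin (n+1) → ℝ) :=
    EuclideanSpace.equiv (Fin (n+1)) ℝ with heL
  have he_vol : MeasurePreserving eL volume volume :=
    EuclideanSpace.volume_preserving_symm_measurableEquiv_toLp (Fin (n+1))
  have key := MeasureTheory.integral_divergence_of_hasFDerivAt_off_countable_of_equiv
    eL (fun x y => Iff.rfl) he_vol
    (fun i x => V x i)
    (fun i x => (EuclideanSpace.proj i (𝕜 := ℝ)).comp (V' x))
    ∅ Set.countable_empty a b hle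
    (fun i => ((EuclideanSpace.proj i (𝕜 := ℝ)).continuous.comp
      (Differentiable.continuous (fun x => (hV x).differentiableAt))).continuousOn)
    (fun x _ i => ((EuclideanSpace.proj i (𝕜 := ℝ)).hasFDerivAt.comp x (hV x)))
    (fun x => ∑ i, V' x (EuclideanSpace.single i 1) i)
    (fun x => by
      refine Finset.sum_congr rfl (fun i _ => ?_)
      rfl)
    hi.integrableOn
  have hfaces : ∀ (i : Fin (n+1)) (c : ℝ), |c| = Q →
      ∀ y : Fin n → ℝ, V (eL.symm (i.insertNth c y)) i = 0 := by
    intro i c hc y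
    have hnot : eL.symm (i.insertNth c y) ∉ K := by
      intro hmem
      have := hcoord _ hmem i
      have hcoordeq : (eL.symm (i.insertNth c y)) i = c := by
        simp [eL, Fin.insertNth_apply_same]
      rw [hcoordeq, hc] at this
      exact lt_irrefl _ this
    rw [hsupp _ hnot]
    rfl
  have hrhs : (∫ x, ∑ i, V' x (EuclideanSpace.single i 1) i)
      = ∫ x in Set.Icc a b, ∑ i, V' x (EuclideanSpace.single i 1) i := by
    rw [setIntegral_eq_integral_of_forall_compl_eq_zero]
    intro x hx
    have hxK : x ∉ K := fun h => hx (hKIcc h)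
    have hV'x : V' x = 0 := by
      have hev : V =ᶠ[nhds x] (fun _ => 0) := by
        filter_upwards [hK.isOpen_compl.mem_nhds hxK] with y hy
        exact hsupp y hy
      have h1 : fderiv ℝ V x = V' x := (hV x).fderiv
      have h2 : fderiv ℝ V x = fderiv ℝ (fun _ => (0:EuclideanSpace ℝ (Fin (n+1)))) x :=
        hev.fderiv_eq
      rw [fderiv_fun_const] at h2
      rw [← h1, h2]; rfl
    simp [hV'x]
  rw [hrhs, key]
  refine Finset.sum_eq_zero (fun i _ => ?_)
  have h1 : ∀ y ∈ Set.Icc (eL a ∘ i.succAbove) (eL b ∘ i.succAbove),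
      V (eL.symm (i.insertNth (eL b i) y)) i = 0 :=
    fun y _ => hfaces i (eL b i) (by show |Q| = Q; exact abs_of_pos hQpos) y
  have h2 : ∀ y ∈ Set.Icc (eL a ∘ i.succAbove) (eL b ∘ i.succAbove),
      V (eL.symm (i.insertNth (eL a i) y)) i = 0 :=
    fun y _ => hfaces i (eL a i) (by show |(-Q)| = Q; rw [abs_neg]; exact abs_of_pos hQpos) y
  rw [setIntegral_congr_fun measurableSet_Icc h1, setIntegral_congr_fun measurableSet_Icc h2]
  simp

end FredholmAux
namespace FredholmAux

-- integrability helper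
lemma integrableOn_of_zero_off_compact {m : ℕ} {g : EuclideanSpace ℝ (Fin m) → ℝ}
    {U K : Set (EuclideanSpace ℝ (Fin m))} (hUo : IsOpen U)
    (hg : ContinuousOn g U) (hKc : IsCompact K) (hKU : K ⊆ U)
    (h0 : ∀ x ∈ U \ K, g x = 0) : IntegrableOn g U := by
  have h1 : IntegrableOn g K := (hg.mono hKU).integrableOn_compact hKc
  have h2 : IntegrableOn g (U \ K) := by
    refine (integrableOn_congr_fun h0 (hUo.measurableSet.diff hKc.measurableSet)).2 ?_
    exact integrableOn_zero
  have hU : U = K ∪ (U \ K) := (Set.union_diff_cancel hKU).symm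
  rw [hU]
  exact h1.union h2

lemma euclid_norm_sq {m : ℕ} (v : EuclideanSpace ℝ (Fin m)) :
    ‖v‖^2 = ∑ i, (v i)^2 := by
  rw [EuclideanSpace.norm_eq, Real.sq_sqrt (by positivity)]
  exact Finset.sum_congr rfl fun i _ => by rw [Real.norm_eq_abs, sq_abs]

end FredholmAux
open FredholmAux

/-- If `0 < Λ` is strictly below the first Dirichlet eigenvalue of `-Δ` on the bounded
connected open set `U` (expressed by the strict Rayleigh quotient inequality for all
nontrivial `H¹₀(U)` functions, here Lipschitz functions vanishing outside `U`), and
`f ∈ H¹₀(U)` solves `-Δf - Λf = -Λ` in `U`, then `f ≤ 0` in `U`. -/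
theorem fredholm_auxiliary_nonpositive
    (n : ℕ) (U : Set (EuclideanSpace ℝ (Fin n)))
    (hUo : IsOpen U) (hUb : Bornology.IsBounded U) (hUc : IsConnected U)
    (Λ : ℝ) (hΛpos : 0 < Λ)
    (hΛ : ∀ w : EuclideanSpace ℝ (Fin n) → ℝ,
      (∃ K : NNReal, LipschitzWith K w) → (∀ x ∉ U, w x = 0) →
      ¬(∀ᵐ x ∂volume, x ∈ U → w x = 0) →
      Λ * ∫ x in U, (w x) ^ 2 < ∫ x in U, ‖gradient w x‖ ^ 2)
    (f : EuclideanSpace ℝ (Fin n) → ℝ)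
    (hfLip : ∃ K : NNReal, LipschitzWith K f)
    (hf0 : ∀ x ∉ U, f x = 0)
    (hfreg : ContDiffOn ℝ 2 f U)
    (heq : ∀ x ∈ U, -lap f x - Λ * f x = -Λ) :
    ∀ x ∈ U, f x ≤ 0 := by
  classical
  obtain ⟨Kf, hKf⟩ := hfLip
  -- a generic nontriviality lemma
  have nontriv : ∀ (w : EuclideanSpace ℝ (Fin n) → ℝ) (x₀ : EuclideanSpace ℝ (Fin n)),
      Continuous w → x₀ ∈ U → 0 < w x₀ → ¬(∀ᵐ x ∂volume, x ∈ U → w x = 0) := by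
    intro w x₀ hwc hx₀ hwx₀ hae
    have hS : IsOpen (U ∩ w ⁻¹' Set.Ioi 0) := hUo.inter (isOpen_Ioi.preimage hwc)
    have hSne : (U ∩ w ⁻¹' Set.Ioi 0).Nonempty := ⟨x₀, hx₀, hwx₀⟩
    have hpos := hS.measure_pos volume hSne
    have hsub : (U ∩ w ⁻¹' Set.Ioi 0) ⊆ {x | ¬(x ∈ U → w x = 0)} := by
      rintro x ⟨hxU, hx⟩
      simp only [Set.mem_setOf_eq, Classical.not_imp]
      exact ⟨hxU, ne_of_gt hx⟩
    have h0 := measure_mono_null hsub (ae_iff.1 hae)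
    exact absurd h0 hpos.ne'
  obtain _ | m := n
  · -- zero-dimensional case: hypotheses are contradictory on nonempty U
    intro x hx
    exfalso
    haveI : Subsingleton (EuclideanSpace ℝ (Fin 0)) :=
      ⟨fun a b => WithLp.ofLp_injective 2 (Subsingleton.elim _ _)⟩
    have h1 := hΛ (fun _ => 1) ⟨0, LipschitzWith.const 1⟩
      (fun y hy => absurd (Subsingleton.elim y x ▸ hx) hy)
      (nontriv _ x continuous_const hx one_pos)
    have hvol : volume U ≠ ⊤ :=
      ((measure_mono subset_closure).trans_lt
        (Metric.isCompact_of_isClosed_isBounded isClosed_closure hUb.closure).measure_lt_top).ne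
    rw [setIntegral_const] at h1
    have hgrad : ∀ x : EuclideanSpace ℝ (Fin 0), gradient (fun _ => (1:ℝ)) x = 0 := by
      intro x
      simp [gradient, fderiv_const]
    have h2 : (∫ x in U, ‖gradient (fun _ => (1:ℝ)) x‖ ^ 2) = 0 := by
      rw [setIntegral_congr_fun hUo.measurableSet (fun x _ => by rw [hgrad x])]
      simp
    rw [h2] at h1
    simp only [one_pow, smul_eq_mul, mul_one] at h1
    have hvpos := hUo.measure_pos volume ⟨x, hx⟩
    have : (0:ℝ) < (volume U).toReal := ENNReal.toReal_pos hvpos.ne' hvol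
    nlinarith [show Λ * (volume U).toReal < 0 from h1]
  · intro x₀ hx₀U
    by_contra hcon
    push_neg at hcon
    set ε : ℝ := min (f x₀ / 3) (1/2) with hε_def
    have hε : 0 < ε := lt_min (by linarith) (by norm_num)
    have hε2 : ε ≤ 1/2 := min_le_right _ _
    have hε3 : 3 * ε ≤ f x₀ := by
      have h := min_le_left (f x₀ / 3) (1/2)
      have : ε ≤ f x₀ / 3 := h
      linarith
    have hfc : Continuous f := hKf.continuous
    -- the compact support set
    set K : Set (EuclideanSpace ℝ (Fin (m+1))) := {x | ε ≤ f x} with hK_def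
    have hKcl : IsClosed K := isClosed_le continuous_const hfc
    have hKU : K ⊆ U := by
      intro x hx
      by_contra h
      rw [Set.mem_setOf_eq, hf0 x h] at hx
      linarith
    have hKcomp : IsCompact K :=
      Metric.isCompact_of_isClosed_isBounded hKcl (hUb.subset hKU)
    have hnotK : ∀ x ∉ K, f x < ε := fun x hx => not_le.1 hx
    -- differentiability facts
    have hfdiff : ∀ x ∈ U, HasFDerivAt f (fderiv ℝ f x) x := by
      intro x hx
      exact ((hfreg.contDiffAt (hUo.mem_nhds hx)).differentiableAt
        (by norm_num)).hasFDerivAt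
    set g : EuclideanSpace ℝ (Fin (m+1)) → EuclideanSpace ℝ (Fin (m+1)) :=
      gradient f with hg_def
    have hg1 : ContDiffOn ℝ 1 g U := by
      have hfd1 : ContDiffOn ℝ 1 (fderiv ℝ f) U := hfreg.fderiv_of_isOpen hUo (by norm_num)
      have hTd : ContDiff ℝ 1 (fun L : (EuclideanSpace ℝ (Fin (m+1))) →L[ℝ] ℝ =>
          (InnerProductSpace.toDual ℝ (EuclideanSpace ℝ (Fin (m+1)))).symm L) :=
        (InnerProductSpace.toDual ℝ (EuclideanSpace ℝ (Fin (m+1)))).symm.contDiff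
      exact hTd.comp_contDiffOn hfd1
    have hgd : ∀ x ∈ U, HasFDerivAt g (fderiv ℝ g x) x := by
      intro x hx
      exact ((hg1.contDiffAt (hUo.mem_nhds hx)).differentiableAt one_ne_zero).hasFDerivAt
    have hgc : ContinuousOn g U := hg1.continuousOn
    have hgc' : ContinuousOn (fderiv ℝ g) U :=
      hg1.continuousOn_fderiv_of_isOpen hUo le_rfl
    -- coordinates of the gradient
    have hgco : ∀ x ∈ U, ∀ i, fderiv ℝ f x (EuclideanSpace.single i 1) = g x i := by
      intro x hx i
      have hd : DifferentiableAt ℝ f x := (hfdiff x hx).differentiableAt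
      have h1 : HasFDerivAt f
          ((InnerProductSpace.toDual ℝ (EuclideanSpace ℝ (Fin (m+1)))) (g x)) x :=
        hasGradientAt_iff_hasFDerivAt.1 hd.hasGradientAt
      rw [h1.fderiv]
      simp [InnerProductSpace.toDual_apply_apply, EuclideanSpace.inner_single_right]
    -- the second-derivative sum
    set Lg : EuclideanSpace ℝ (Fin (m+1)) → ℝ :=
      fun x => ∑ i, (fderiv ℝ g x (EuclideanSpace.single i 1)) i with hLg_def
    have hlap : ∀ x ∈ U, lap f x = Lg x := by
      intro x hx
      refine Finset.sum_congr rfl (fun i _ => ?_)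
      have hev : (fun y => fderiv ℝ f y (EuclideanSpace.single i 1)) =ᶠ[nhds x]
          (fun y => g y i) := by
        filter_upwards [hUo.mem_nhds hx] with y hy
        exact hgco y hy i
      have h2 : HasFDerivAt (fun y => g y i)
          ((EuclideanSpace.proj i (𝕜 := ℝ)).comp (fderiv ℝ g x)) x :=
        (EuclideanSpace.proj i (𝕜 := ℝ)).hasFDerivAt.comp x (hgd x hx)
      rw [hev.fderiv_eq, h2.fderiv]
      rfl
    -- the vector field and its derivative
    set V : EuclideanSpace ℝ (Fin (m+1)) → EuclideanSpace ℝ (Fin (m+1)) :=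
      fun x => phi ε (f x) • g x with hV_def
    set V' : EuclideanSpace ℝ (Fin (m+1)) →
        (EuclideanSpace ℝ (Fin (m+1)) →L[ℝ] EuclideanSpace ℝ (Fin (m+1))) :=
      fun x => if x ∈ U then
          phi ε (f x) • fderiv ℝ g x + ((chi ε (f x))^2 • fderiv ℝ f x).smulRight (g x)
        else 0 with hV'_def
    have hVd : ∀ x, HasFDerivAt V (V' x) x := by
      intro x
      by_cases hx : x ∈ U
      · rw [hV'_def]
        simp only [if_pos hx]
        have hc : HasFDerivAt (fun y => phi ε (f y)) ((chi ε (f x))^2 • fderiv ℝ f x) x :=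
          (phi_hasDeriv ε (f x)).comp_hasFDerivAt x (hfdiff x hx)
        exact hc.smul (hgd x hx)
      · rw [hV'_def]
        simp only [if_neg hx]
        have hxK : x ∉ K := fun h => hx (hKU h)
        have hev : V =ᶠ[nhds x] (fun _ => 0) := by
          filter_upwards [hKcl.isOpen_compl.mem_nhds hxK] with y hy
          rw [hV_def]
          simp only
          rw [phi_eq_zero hε (hnotK y hy).le, zero_smul]
        exact (hasFDerivAt_const (0 : EuclideanSpace ℝ (Fin (m+1))) x).congr_of_eventuallyEq hev
    -- the two integrands
    set T1 : EuclideanSpace ℝ (Fin (m+1)) → ℝ :=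
      fun x => (chi ε (f x))^2 * ‖g x‖^2 with hT1_def
    set T2 : EuclideanSpace ℝ (Fin (m+1)) → ℝ :=
      fun x => phi ε (f x) * Lg x with hT2_def
    -- the divergence computation
    have hD : ∀ x, (∑ i, V' x (EuclideanSpace.single i 1) i) = T1 x + T2 x := by
      intro x
      by_cases hx : x ∈ U
      · have hterm : ∀ i, V' x (EuclideanSpace.single i 1) i
            = phi ε (f x) * (fderiv ℝ g x (EuclideanSpace.single i 1)) i
              + (chi ε (f x))^2 * ((g x i) * (g x i)) := by
          intro i
          rw [hV'_def]
          simp only [if_pos hx, ContinuousLinearMap.add_apply,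
            ContinuousLinearMap.coe_smul', Pi.smul_apply,
            ContinuousLinearMap.smulRight_apply, ContinuousLinearMap.smul_apply,
            PiLp.add_apply, PiLp.smul_apply, smul_eq_mul, hgco x hx i]
          ring
        rw [Finset.sum_congr rfl (fun i _ => hterm i), Finset.sum_add_distrib,
          ← Finset.mul_sum, ← Finset.mul_sum]
        have hns : ∑ i, (g x i * g x i) = ‖g x‖^2 := by
          rw [euclid_norm_sq]
          exact Finset.sum_congr rfl (fun i _ => (pow_two (g x i)).symm)
        rw [hns, hT1_def, hT2_def]
        ring
      · have hxK : x ∉ K := fun h => hx (hKU h)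
        have hfx := hnotK x hxK
        rw [hV'_def]
        simp only [if_neg hx, ContinuousLinearMap.zero_apply]
        rw [hT1_def, hT2_def]
        simp only [chi_eq_zero hε hfx.le, phi_eq_zero hε hfx.le]
        simp
    have hT1K : ∀ x ∉ K, T1 x = 0 := by
      intro x hx
      rw [hT1_def]; simp only; rw [chi_eq_zero hε (hnotK x hx).le]; ring
    have hT2K : ∀ x ∉ K, T2 x = 0 := by
      intro x hx
      rw [hT2_def]; simp only; rw [phi_eq_zero hε (hnotK x hx).le]; ring
    have hphic : Continuous (phi ε) :=
      (Differentiable.continuous (fun t => (phi_hasDeriv ε t).differentiableAt))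
    have hchic : Continuous (chi ε) := chi_cont ε
    have hpsic : Continuous (psi ε) := psi_lipschitz.continuous
    have hT1c : ContinuousOn T1 U := by
      apply ContinuousOn.mul
      · exact ((hchic.comp hfc).pow 2).continuousOn
      · exact (hgc.norm.pow 2)
    have hLgc : ContinuousOn Lg U := by
      rw [hLg_def]
      apply continuousOn_finset_sum
      intro i _
      have h1 : ContinuousOn (fun x => fderiv ℝ g x (EuclideanSpace.single i 1)) U :=
        hgc'.clm_apply continuousOn_const
      exact (EuclideanSpace.proj i (𝕜 := ℝ)).continuous.comp_continuousOn h1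
    have hT2c : ContinuousOn T2 U :=
      ((hphic.comp hfc).continuousOn).mul hLgc
    have hT1int : IntegrableOn T1 U :=
      integrableOn_of_zero_off_compact hUo hT1c hKcomp hKU (fun x hx => hT1K x hx.2)
    have hT2int : IntegrableOn T2 U :=
      integrableOn_of_zero_off_compact hUo hT2c hKcomp hKU (fun x hx => hT2K x hx.2)
    have hFint : Integrable (fun x => T1 x + T2 x) := by
      have hsupp : Function.support (fun x => T1 x + T2 x) ⊆ K := by
        intro x hne
        rw [Function.mem_support] at hne
        by_contra hxK
        rw [hT1K x hxK, hT2K x hxK] at hne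
        simp at hne
      exact (integrableOn_iff_integrable_of_support_subset hsupp).1
        (((hT1c.mono hKU).integrableOn_compact hKcomp).add
          ((hT2c.mono hKU).integrableOn_compact hKcomp))
    -- Green's identity
    have hgreen : (∫ x, (T1 x + T2 x)) = 0 := by
      have h1 : (fun x => ∑ i, V' x (EuclideanSpace.single i 1) i)
          = fun x => T1 x + T2 x := funext hD
      rw [← h1]
      refine green V V' K hKcl (hUb.subset hKU) hVd ?_ ?_
      · intro x hx
        rw [hV_def]
        simp only
        rw [phi_eq_zero hε (hnotK x hx).le, zero_smul]
      · rw [h1]; exact hFint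
    have hsplit : (∫ x in U, T1 x) + (∫ x in U, T2 x) = 0 := by
      rw [← integral_add hT1int hT2int]
      rw [setIntegral_eq_integral_of_forall_compl_eq_zero (fun x hx => ?_), hgreen]
      have hxK : x ∉ K := fun h => hx (hKU h)
      rw [hT1K x hxK, hT2K x hxK]; ring
    -- use the PDE
    have hT2eq : (∫ x in U, T2 x) = Λ * ∫ x in U, phi ε (f x) * (1 - f x) := by
      rw [← integral_const_mul]
      refine setIntegral_congr_fun hUo.measurableSet (fun x hx => ?_)
      have h1 := heq x hx
      have h2 : Lg x = Λ * (1 - f x) := by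
        rw [← hlap x hx]; linarith [h1]
      rw [hT2_def]
      simp only
      rw [h2]; ring
    have hmain : (∫ x in U, T1 x) = Λ * ∫ x in U, phi ε (f x) * (f x - 1) := by
      have hneg : (∫ x in U, phi ε (f x) * (f x - 1))
          = -∫ x in U, phi ε (f x) * (1 - f x) := by
        rw [← integral_neg]
        refine setIntegral_congr_fun hUo.measurableSet (fun x _ => ?_)
        ring
      rw [hneg]
      rw [hT2eq] at hsplit
      linarith
    -- the test function
    set w : EuclideanSpace ℝ (Fin (m+1)) → ℝ := fun x => psi ε (f x) with hw_def
    have hwlip : LipschitzWith (1 * Kf) w := psi_lipschitz.comp hKf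
    have hw0 : ∀ x ∉ U, w x = 0 := by
      intro x hx
      rw [hw_def]
      simp only
      rw [hf0 x hx]
      exact psi_eq_zero hε hε.le
    have hwx₀ : 0 < w x₀ := by
      have h1 : 2 * ε ≤ f x₀ := by linarith
      have h2 := psi_ge hε h1
      rw [hw_def]
      simp only
      linarith
    have hnt := nontriv w x₀ hwlip.continuous hx₀U hwx₀
    have HL := hΛ w ⟨1 * Kf, hwlip⟩ hw0 hnt
    -- identify the Dirichlet energy
    have hgradw : (∫ x in U, ‖gradient w x‖ ^ 2) = ∫ x in U, T1 x := by
      refine setIntegral_congr_fun hUo.measurableSet (fun x hx => ?_)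
      have h1 : HasFDerivAt w (chi ε (f x) • fderiv ℝ f x) x :=
        (psi_hasDeriv ε (f x)).comp_hasFDerivAt x (hfdiff x hx)
      have h2 : HasGradientAt w (chi ε (f x) • g x) x := by
        have h3 := hasFDerivAt_iff_hasGradientAt.1 h1
        have h4 : (InnerProductSpace.toDual ℝ
            (EuclideanSpace ℝ (Fin (m+1)))).symm (chi ε (f x) • fderiv ℝ f x)
            = chi ε (f x) • g x := by
          rw [_root_.map_smul]
          rfl
        rwa [h4] at h3
      rw [h2.gradient, hT1_def]
      simp only
      rw [norm_smul, mul_pow, Real.norm_eq_abs, sq_abs]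
    -- the comparison of integrals
    have hcomp : (∫ x in U, phi ε (f x) * (f x - 1)) ≤ ∫ x in U, (psi ε (f x))^2 := by
      refine setIntegral_mono_on ?_ ?_ hUo.measurableSet (fun x _ => key_ineq hε hε2)
      · refine integrableOn_of_zero_off_compact hUo ?_ hKcomp hKU (fun x hx => ?_)
        · exact (((hphic.comp hfc).mul (hfc.sub continuous_const)).continuousOn)
        · rw [phi_eq_zero hε (hnotK x hx.2).le]; ring
      · refine integrableOn_of_zero_off_compact hUo ?_ hKcomp hKU (fun x hx => ?_)
        · exact (((hpsic.comp hfc).pow 2).continuousOn)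
        · rw [psi_eq_zero hε (hnotK x hx.2).le]; ring
    have hfin : (∫ x in U, w x ^ 2) = ∫ x in U, (psi ε (f x))^2 := by
      rw [hw_def]
    have hmul := mul_le_mul_of_nonneg_left hcomp hΛpos.le
    rw [hfin] at HL
    rw [hgradw, hmain] at HL
    linarith
end
end

section
/- (Appendix II constants estimate) Suppose real constants C₊, C₋, D₊, D₋, γ, μ and θ₀ ∈ (0, 2π/3) satisfy: C₊ sin(2θ₀ + D₊) + γ = 0, C₋ sin(2θ₀ + D₋) + μ = 0, C₊ cos(2θ₀ + D₊) = C₋ cos(2θ₀ + D₋), C₊ sin(D₊) = -γ, and C₋ sin(4π/3 + D₋) = -μ. Then C₊² - C₋² = γ² - μ², and if additionally |C₊| > 10⁶(|γ| + |μ|), then |C₋| ≤ 2|μ| and hence |C₊|² ≤ γ² - μ² + 4μ², giving a bound on |C₊| in terms of |γ| and |μ| — contradicting |C₊| > 10⁶(|γ|+|μ|) when (γ,μ) ≠ (0,0) scale appropriately. -/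
open Real

set_option maxHeartbeats 1600000 in
/-- Appendix II constants estimate. -/
theorem appendix_II_constants
    (Cp Cm Dp Dm γ μ θ₀ : ℝ)
    (hθ₀ : θ₀ ∈ Set.Ioo 0 (2 * π / 3))
    (h1 : Cp * Real.sin (2 * θ₀ + Dp) + γ = 0)
    (h2 : Cm * Real.sin (2 * θ₀ + Dm) + μ = 0)
    (h3 : Cp * Real.cos (2 * θ₀ + Dp) = Cm * Real.cos (2 * θ₀ + Dm))
    (h4 : Cp * Real.sin Dp = -γ)
    (h5 : Cm * Real.sin (4 * π / 3 + Dm) = -μ) :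
    Cp ^ 2 - Cm ^ 2 = γ ^ 2 - μ ^ 2 ∧
      (|Cp| > 10 ^ 6 * (|γ| + |μ|) →
        |Cm| ≤ 2 * |μ| ∧ Cp ^ 2 ≤ γ ^ 2 - μ ^ 2 + 4 * μ ^ 2) := by
  obtain ⟨hθ₁, hθ₂⟩ := hθ₀
  have hpi := Real.pi_gt_three
  have hA : Cp * Real.sin (2 * θ₀ + Dp) = -γ := by linarith
  have hB : Cm * Real.sin (2 * θ₀ + Dm) = -μ := by linarith
  have hA2 : (Cp * Real.sin (2 * θ₀ + Dp)) ^ 2 = γ ^ 2 := by rw [hA]; ring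
  have hB2 : (Cm * Real.sin (2 * θ₀ + Dm)) ^ 2 = μ ^ 2 := by rw [hB]; ring
  have eP : Cp ^ 2 = γ ^ 2 + (Cp * Real.cos (2 * θ₀ + Dp)) ^ 2 := by
    have h := Real.sin_sq_add_cos_sq (2 * θ₀ + Dp)
    nlinarith [h, hA2]
  have eM : Cm ^ 2 = μ ^ 2 + (Cm * Real.cos (2 * θ₀ + Dm)) ^ 2 := by
    have h := Real.sin_sq_add_cos_sq (2 * θ₀ + Dm)
    nlinarith [h, hB2]
  have key : Cp ^ 2 - Cm ^ 2 = γ ^ 2 - μ ^ 2 := by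
    rw [eP, eM, h3]; ring
  refine ⟨key, fun hC => ?_⟩
  have habs : (0:ℝ) ≤ 10 ^ 6 * (|γ| + |μ|) := by positivity
  have hCp0 : Cp ≠ 0 := by
    intro h; rw [h, abs_zero] at hC; linarith
  -- sin equality for the plus branch
  have e1 : Real.sin (2 * θ₀ + Dp) = Real.sin Dp := by
    have : Cp * Real.sin (2 * θ₀ + Dp) = Cp * Real.sin Dp := by linarith
    exact mul_left_cancel₀ hCp0 this
  have hsinθ : 0 < Real.sin θ₀ := Real.sin_pos_of_pos_of_lt_pi hθ₁ (by linarith)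
  have hcosp : Real.cos (θ₀ + Dp) = 0 := by
    have := Real.sin_sub_sin (2 * θ₀ + Dp) Dp
    rw [e1, sub_self] at this
    have h' : (2 * θ₀ + Dp - Dp) / 2 = θ₀ := by ring
    have h'' : (2 * θ₀ + Dp + Dp) / 2 = θ₀ + Dp := by ring
    rw [h', h''] at this
    rcases mul_eq_zero.1 this.symm with h | h
    · rcases mul_eq_zero.1 h with h | h
      · norm_num at h
      · linarith
    · exact h
  have hsinp : Real.sin (θ₀ + Dp) ^ 2 = 1 := by
    have := Real.sin_sq_add_cos_sq (θ₀ + Dp); rw [hcosp] at this; nlinarith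
  have hDp : Real.sin Dp = Real.sin (θ₀ + Dp) * Real.cos θ₀ := by
    have : Dp = (θ₀ + Dp) - θ₀ := by ring
    rw [this, Real.sin_sub, hcosp]; ring
  have hγ2 : γ ^ 2 = Cp ^ 2 * Real.cos θ₀ ^ 2 := by
    have : (Cp * Real.sin Dp) ^ 2 = γ ^ 2 := by rw [h4]; ring
    rw [hDp] at this
    linear_combination -this + Cp ^ 2 * Real.cos θ₀ ^ 2 * hsinp
  have hs : |Cp| > 2 * (|γ| + |μ|) := by
    have h0 : (0:ℝ) ≤ |γ| + |μ| := by positivity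
    have h6 : (10:ℝ) ^ 6 * (|γ| + |μ|) = 1000000 * (|γ| + |μ|) := by norm_num
    rw [h6] at hC
    linarith
  have hbig : Cp ^ 2 > 4 * (|γ| + |μ|) ^ 2 := by
    have h0 : (0:ℝ) ≤ 2 * (|γ| + |μ|) := by positivity
    have h1 := pow_lt_pow_left₀ hs h0 (by norm_num : (2:ℕ) ≠ 0)
    have h2 : (2 * (|γ| + |μ|)) ^ 2 = 4 * (|γ| + |μ|) ^ 2 := by ring
    have h3 := sq_abs Cp
    linarith
  have hγabs : γ ^ 2 ≤ (|γ| + |μ|) ^ 2 := by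
    have h1 : |γ| ≤ |γ| + |μ| := by linarith [abs_nonneg μ]
    have h2 := pow_le_pow_left₀ (abs_nonneg γ) h1 2
    have h3 := sq_abs γ
    linarith
  have hCp2pos : 0 < Cp ^ 2 := by positivity
  have hcossq : Real.cos θ₀ ^ 2 < 1 / 4 := by
    have hx : Cp ^ 2 * Real.cos θ₀ ^ 2 < Cp ^ 2 * (1 / 4) := by linarith
    exact (mul_lt_mul_iff_right₀ hCp2pos).mp hx
  have hcos12 : Real.cos θ₀ < 1 / 2 := by
    by_contra h
    push_neg at h
    have h1 : (1/2:ℝ) * (1/2) ≤ Real.cos θ₀ * Real.cos θ₀ :=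
      mul_le_mul h h (by norm_num) (le_trans (by norm_num) h)
    have h2 := pow_two (Real.cos θ₀)
    linarith
  have hθ3 : π / 3 < θ₀ := by
    by_contra h
    push_neg at h
    have := Real.cos_le_cos_of_nonneg_of_le_pi hθ₁.le (by linarith) h
    rw [Real.cos_pi_div_three] at this; linarith
  -- Cm ≠ 0
  have hCm2 : Cm ^ 2 > μ ^ 2 := by linarith [key, hbig, hγabs, sq_nonneg γ]
  have hCm0 : Cm ≠ 0 := by
    intro h; rw [h] at hCm2; nlinarith [sq_nonneg μ]
  -- sin equality for the minus branch
  have e2 : Real.sin (4 * π / 3 + Dm) = Real.sin (2 * θ₀ + Dm) := by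
    have : Cm * Real.sin (4 * π / 3 + Dm) = Cm * Real.sin (2 * θ₀ + Dm) := by linarith
    exact mul_left_cancel₀ hCm0 this
  have hsinθ2 : 0 < Real.sin (2 * π / 3 - θ₀) :=
    Real.sin_pos_of_pos_of_lt_pi (by linarith) (by linarith)
  have hcosm : Real.cos (2 * π / 3 + θ₀ + Dm) = 0 := by
    have := Real.sin_sub_sin (4 * π / 3 + Dm) (2 * θ₀ + Dm)
    rw [e2, sub_self] at this
    have h' : (4 * π / 3 + Dm - (2 * θ₀ + Dm)) / 2 = 2 * π / 3 - θ₀ := by ring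
    have h'' : (4 * π / 3 + Dm + (2 * θ₀ + Dm)) / 2 = 2 * π / 3 + θ₀ + Dm := by ring
    rw [h', h''] at this
    rcases mul_eq_zero.1 this.symm with h | h
    · rcases mul_eq_zero.1 h with h | h
      · norm_num at h
      · linarith
    · exact h
  have hsinm : Real.sin (2 * π / 3 + θ₀ + Dm) ^ 2 = 1 := by
    have := Real.sin_sq_add_cos_sq (2 * π / 3 + θ₀ + Dm); rw [hcosm] at this; nlinarith
  have hDm : Real.sin (2 * θ₀ + Dm) =
      Real.sin (2 * π / 3 + θ₀ + Dm) * Real.cos (2 * π / 3 - θ₀) := by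
    have : 2 * θ₀ + Dm = (2 * π / 3 + θ₀ + Dm) - (2 * π / 3 - θ₀) := by ring
    rw [this, Real.sin_sub, hcosm]; ring
  have hμ2 : μ ^ 2 = Cm ^ 2 * Real.cos (2 * π / 3 - θ₀) ^ 2 := by
    have h2' : Cm * Real.sin (2 * θ₀ + Dm) = -μ := by linarith
    have : (Cm * Real.sin (2 * θ₀ + Dm)) ^ 2 = μ ^ 2 := by rw [h2']; ring
    rw [hDm] at this
    linear_combination -this + Cm ^ 2 * Real.cos (2 * π / 3 - θ₀) ^ 2 * hsinm
  have hcosge : (1:ℝ) / 2 ≤ Real.cos (2 * π / 3 - θ₀) := by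
    have := Real.cos_le_cos_of_nonneg_of_le_pi (by linarith : (0:ℝ) ≤ 2 * π / 3 - θ₀)
      (by linarith : π / 3 ≤ π) (by linarith : 2 * π / 3 - θ₀ ≤ π / 3)
    rw [Real.cos_pi_div_three] at this; linarith
  have hCmle : Cm ^ 2 ≤ 4 * μ ^ 2 := by
    have h1 : (1/2:ℝ) * (1/2) ≤ Real.cos (2 * π / 3 - θ₀) * Real.cos (2 * π / 3 - θ₀) :=
      mul_le_mul hcosge hcosge (by norm_num) (le_trans (by norm_num) hcosge)
    have h2 := pow_two (Real.cos (2 * π / 3 - θ₀))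
    have h3 : Cm ^ 2 * (1 / 4) ≤ Cm ^ 2 * Real.cos (2 * π / 3 - θ₀) ^ 2 :=
      mul_le_mul_of_nonneg_left (by linarith) (sq_nonneg Cm)
    linarith
  constructor
  · by_contra h
    push_neg at h
    have h0 : (0:ℝ) ≤ 2 * |μ| := by positivity
    have h1 := pow_lt_pow_left₀ h h0 (by norm_num : (2:ℕ) ≠ 0)
    have h2 := sq_abs Cm
    have h3 := sq_abs μ
    have h4 : (2 * |μ|) ^ 2 = 4 * |μ| ^ 2 := by ring
    linarith
  · linarith [key, hCmle]
end
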